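/- Let e be a Demazure root of a cone σ ⊆ N⊗ℚ with distinguished ray ρ and primitive vector p_ρ. Then the derivation ∂_e of the semigroup algebra K[σ^∨ ∩ M] defined on monomials by ∂_e(χ^m) = ⟨p_ρ, m⟩ χ^{m+e} is a well-defined K-derivation. -/

import Mathlib

/-- The standard pairing between the lattice `N = ℤ^n` and its dual `M = ℤ^n`. -/
def dotp {n : ℕ} (p e : Fin n → ℤ) : ℤ := ∑ k, p k * e k

/-- The additive monoid `σ^∨ ∩ M` of lattice points of the dual cone of the cone `σ`
generated by the (primitive generators of its) rays `p 0, …, p (m-1)`. -/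
def dualConeM {n m : ℕ} (p : Fin m → Fin n → ℤ) : AddSubmonoid (Fin n → ℤ) where
  carrier := {v | ∀ k, 0 ≤ dotp (p k) v}
  zero_mem' := by
    intro k
    simp [dotp]
  add_mem' := by
    intro a b ha hb k
    have : dotp (p k) (a + b) = dotp (p k) a + dotp (p k) b := by
      simp [dotp, mul_add, Finset.sum_add_distrib]
    rw [this]
    exact add_nonneg (ha k) (hb k)

/-- Let `e` be a Demazure root of a cone `σ` with distinguished ray `ρ`.
Then (i) for `m ∈ σ^∨ ∩ M` with `⟨p_ρ, m⟩ ≠ 0` also `m + e ∈ σ^∨ ∩ M`, and (ii) there is a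
well-defined `K`-linear derivation `∂_e` of the semigroup algebra `K[σ^∨ ∩ M]` with
`∂_e(χ^m) = ⟨p_ρ, m⟩ χ^{m+e}` on monomials. -/
theorem stmt_5 (K : Type*) [Field K] [CharZero K] (n m : ℕ)
    (p : Fin m → Fin n → ℤ) (ρ : Fin m) (e : Fin n → ℤ)
    (he : dotp (p ρ) e = -1) (he' : ∀ k, k ≠ ρ → 0 ≤ dotp (p k) e) :
    (∀ v ∈ dualConeM p, dotp (p ρ) v ≠ 0 → v + e ∈ dualConeM p) ∧
    ∃ D : AddMonoidAlgebra K (dualConeM p) →ₗ[K] AddMonoidAlgebra K (dualConeM p),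
      (∀ a b : AddMonoidAlgebra K (dualConeM p), D (a * b) = a * D b + D a * b) ∧
      ∀ (v : Fin n → ℤ) (hv : v ∈ dualConeM p),
        (dotp (p ρ) v = 0 →
          D (AddMonoidAlgebra.single (⟨v, hv⟩ : dualConeM p) (1 : K)) = 0) ∧
        ∀ hve : v + e ∈ dualConeM p,
          D (AddMonoidAlgebra.single (⟨v, hv⟩ : dualConeM p) (1 : K)) =
            (dotp (p ρ) v : K) •
              AddMonoidAlgebra.single (⟨v + e, hve⟩ : dualConeM p) (1 : K) := by
  classical
  have dotp_add : ∀ (k : Fin m) (a b : Fin n → ℤ),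
      dotp (p k) (a + b) = dotp (p k) a + dotp (p k) b := by
    intro k a b
    simp [dotp, mul_add, Finset.sum_add_distrib]
  have hi : ∀ v ∈ dualConeM p, dotp (p ρ) v ≠ 0 → v + e ∈ dualConeM p := by
    intro v hv hne k
    rw [dotp_add]
    by_cases hk : k = ρ
    · subst hk
      have h1 : 0 ≤ dotp (p k) v := hv k
      have h2 : 1 ≤ dotp (p k) v := lt_of_le_of_ne h1 (Ne.symm hne)
      linarith
    · exact add_nonneg (hv k) (he' k hk)
  refine ⟨hi, ?_⟩
  set S := dualConeM p with hS
  let φ : S → AddMonoidAlgebra K S := fun v =>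
    if h : (v : Fin n → ℤ) + e ∈ S then
      (dotp (p ρ) (v : Fin n → ℤ) : K) •
        AddMonoidAlgebra.single (⟨(v : Fin n → ℤ) + e, h⟩ : S) 1
    else 0
  have hφ0 : ∀ w : S, dotp (p ρ) (w : Fin n → ℤ) = 0 → φ w = 0 := by
    intro w hw
    simp [φ, hw]
  have hφ1 : ∀ (w : S) (h : (w : Fin n → ℤ) + e ∈ S),
      φ w = (dotp (p ρ) (w : Fin n → ℤ) : K) •
        AddMonoidAlgebra.single (⟨(w : Fin n → ℤ) + e, h⟩ : S) 1 := by
    intro w h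
    simp [φ, dif_pos h]
  have hφadd : ∀ u v : S, φ (u + v) =
      AddMonoidAlgebra.single u (1 : K) * φ v + φ u * AddMonoidAlgebra.single v (1 : K) := by
    intro u v
    have hcoe : ((u + v : S) : Fin n → ℤ) = (u : Fin n → ℤ) + (v : Fin n → ℤ) := rfl
    have hd : dotp (p ρ) ((u + v : S) : Fin n → ℤ)
        = dotp (p ρ) (u : Fin n → ℤ) + dotp (p ρ) (v : Fin n → ℤ) := by
      rw [hcoe, dotp_add]
    have hu0 : 0 ≤ dotp (p ρ) (u : Fin n → ℤ) := u.2 ρ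
    have hv0 : 0 ≤ dotp (p ρ) (v : Fin n → ℤ) := v.2 ρ
    by_cases hsum : dotp (p ρ) ((u + v : S) : Fin n → ℤ) = 0
    · have hdu : dotp (p ρ) (u : Fin n → ℤ) = 0 := by rw [hd] at hsum; linarith
      have hdv : dotp (p ρ) (v : Fin n → ℤ) = 0 := by rw [hd] at hsum; linarith
      rw [hφ0 _ hsum, hφ0 _ hdu, hφ0 _ hdv]
      simp
    · have hmem : ((u + v : S) : Fin n → ℤ) + e ∈ S := hi _ (u + v).2 hsum
      rw [hφ1 _ hmem]
      have hL : AddMonoidAlgebra.single u (1 : K) * φ v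
          = (dotp (p ρ) (v : Fin n → ℤ) : K) •
            AddMonoidAlgebra.single (⟨((u + v : S) : Fin n → ℤ) + e, hmem⟩ : S) 1 := by
        by_cases hdv : dotp (p ρ) (v : Fin n → ℤ) = 0
        · rw [hφ0 _ hdv, hdv]
          simp
        · have hvm : (v : Fin n → ℤ) + e ∈ S := hi _ v.2 hdv
          rw [hφ1 _ hvm, mul_smul_comm, AddMonoidAlgebra.single_mul_single, one_mul]
          have : u + (⟨(v : Fin n → ℤ) + e, hvm⟩ : S)
              = (⟨((u + v : S) : Fin n → ℤ) + e, hmem⟩ : S) := by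
            apply Subtype.ext
            show (u : Fin n → ℤ) + ((v : Fin n → ℤ) + e)
                = ((u : Fin n → ℤ) + (v : Fin n → ℤ)) + e
            exact (add_assoc _ _ _).symm
          rw [this]
      have hR : φ u * AddMonoidAlgebra.single v (1 : K)
          = (dotp (p ρ) (u : Fin n → ℤ) : K) •
            AddMonoidAlgebra.single (⟨((u + v : S) : Fin n → ℤ) + e, hmem⟩ : S) 1 := by
        by_cases hdu : dotp (p ρ) (u : Fin n → ℤ) = 0
        · rw [hφ0 _ hdu, hdu]
          simp
        · have hum : (u : Fin n → ℤ) + e ∈ S := hi _ u.2 hdu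
          rw [hφ1 _ hum, smul_mul_assoc, AddMonoidAlgebra.single_mul_single, one_mul]
          have : (⟨(u : Fin n → ℤ) + e, hum⟩ : S) + v
              = (⟨((u + v : S) : Fin n → ℤ) + e, hmem⟩ : S) := by
            apply Subtype.ext
            show ((u : Fin n → ℤ) + e) + (v : Fin n → ℤ)
                = ((u : Fin n → ℤ) + (v : Fin n → ℤ)) + e
            rw [add_assoc, add_comm e, ← add_assoc]
          rw [this]
      rw [hL, hR, hd, ← add_smul]
      push_cast
      ring_nf
  let D : AddMonoidAlgebra K S →ₗ[K] AddMonoidAlgebra K S :=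
    (Finsupp.lsum K fun v => LinearMap.toSpanSingleton K _ (φ v)) ∘ₗ
      (AddMonoidAlgebra.coeffLinearEquiv K).toLinearMap
  have hDsingle : ∀ (v : S) (c : K), D (AddMonoidAlgebra.single v c) = c • φ v := by
    intro v c
    show (Finsupp.lsum K fun v => LinearMap.toSpanSingleton K _ (φ v)) (Finsupp.single v c)
        = c • φ v
    rw [Finsupp.lsum_single, LinearMap.toSpanSingleton_apply]
  have leib : ∀ a b : AddMonoidAlgebra K S, D (a * b) = a * D b + D a * b := by
    intro a b
    induction a using AddMonoidAlgebra.induction_linear with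
    | zero => simp
    | add f g hf hg =>
      rw [add_mul, map_add, hf, hg, map_add]
      ring
    | single u c =>
      induction b using AddMonoidAlgebra.induction_linear with
      | zero => simp
      | add f g hf hg =>
        rw [mul_add, map_add, hf, hg, map_add]
        ring
      | single v d =>
        show D (AddMonoidAlgebra.single u c * AddMonoidAlgebra.single v d) = _
        rw [AddMonoidAlgebra.single_mul_single]
        have hu1 : (AddMonoidAlgebra.single u c : AddMonoidAlgebra K S)
            = c • (AddMonoidAlgebra.single u (1 : K) : AddMonoidAlgebra K S) := by
          rw [AddMonoidAlgebra.smul_single', mul_one]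
        have hv1 : (AddMonoidAlgebra.single v d : AddMonoidAlgebra K S)
            = d • (AddMonoidAlgebra.single v (1 : K) : AddMonoidAlgebra K S) := by
          rw [AddMonoidAlgebra.smul_single', mul_one]
        rw [hDsingle, hDsingle, hDsingle, hφadd, hu1, hv1]
        simp only [smul_add, smul_mul_assoc, mul_smul_comm, smul_smul]
        rw [mul_comm d c]
  refine ⟨D, leib, ?_⟩
  intro v hv
  constructor
  · intro hv0
    rw [hDsingle, hφ0 ⟨v, hv⟩ hv0, smul_zero]
  · intro hve
    rw [hDsingle, hφ1 ⟨v, hv⟩ hve, one_smul]
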